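/- Let X_1, X_2, … be i.i.d. real random variables with mean μ such that X_k − μ is 1-sub-Gaussian, and let μ̂_w = (1/w)·Σ_{k=1}^w X_k. Then for every Δ with 0 < Δ ≤ 1, both Σ_{w=1}^∞ P( μ̂_w − μ > Δ − √(4·log w / w) ) ≤ (36/Δ²)·log(17/Δ) and Σ_{w=1}^∞ P( μ̂_w − μ < √(4·log w / w) − Δ ) ≤ (36/Δ²)·log(17/Δ). -/

import Mathlib

open MeasureTheory ProbabilityTheory
open scoped ENNReal

/-- Chernoff bound for sums of centered variables with sub-Gaussian mgf bound. -/
lemma aux_chernoff {Ω : Type*} [MeasurableSpace Ω] (P : Measure Ω) [IsProbabilityMeasure P]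
    (Y : ℕ → Ω → ℝ)
    (hmeas : ∀ k, Measurable (Y k))
    (hindep : iIndepFun Y P)
    (hsubg : ∀ k (l : ℝ), Integrable (fun ω => Real.exp (l * Y k ω)) P ∧
      ∫ ω, Real.exp (l * Y k ω) ∂P ≤ Real.exp (l ^ 2 / 2))
    (n : ℕ) (ε : ℝ) (hε : 0 ≤ ε) :
    P {ω | (n : ℝ) * ε ≤ ∑ k ∈ Finset.range n, Y k ω}
      ≤ ENNReal.ofReal (Real.exp (-((n : ℝ) * ε ^ 2) / 2)) := by
  have hint : Integrable (fun ω => Real.exp (ε * (∑ k ∈ Finset.range n, Y k) ω)) P :=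
    hindep.integrable_exp_mul_sum hmeas (fun i _ => (hsubg i ε).1)
  have hch := measure_ge_le_exp_mul_mgf (X := ∑ k ∈ Finset.range n, Y k) (μ := P)
    ((n : ℝ) * ε) hε hint
  have hmgf : mgf (∑ k ∈ Finset.range n, Y k) P ε ≤ Real.exp (ε ^ 2 / 2) ^ n := by
    rw [hindep.mgf_sum hmeas]
    calc ∏ k ∈ Finset.range n, mgf (Y k) P ε
        ≤ ∏ _k ∈ Finset.range n, Real.exp (ε ^ 2 / 2) :=
          Finset.prod_le_prod (fun i _ => mgf_nonneg) (fun i _ => (hsubg i ε).2)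
      _ = _ := by rw [Finset.prod_const, Finset.card_range]
  have hset : {ω | (n : ℝ) * ε ≤ ∑ k ∈ Finset.range n, Y k ω}
      = {ω | (n : ℝ) * ε ≤ (∑ k ∈ Finset.range n, Y k) ω} := by
    ext ω; simp [Finset.sum_apply]
  have hbound : (P {ω | (n : ℝ) * ε ≤ ∑ k ∈ Finset.range n, Y k ω}).toReal
      ≤ Real.exp (-((n : ℝ) * ε ^ 2) / 2) := by
    rw [hset]
    refine hch.trans ?_
    calc Real.exp (-ε * ((n : ℝ) * ε)) * mgf (∑ k ∈ Finset.range n, Y k) P ε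
        ≤ Real.exp (-ε * ((n : ℝ) * ε)) * Real.exp (ε ^ 2 / 2) ^ n :=
          mul_le_mul_of_nonneg_left hmgf (Real.exp_nonneg _)
      _ = Real.exp (-((n : ℝ) * ε ^ 2) / 2) := by
          rw [← Real.exp_one_rpow (ε ^ 2 / 2)]
          rw [Real.exp_one_rpow]
          rw [← Real.exp_nat_mul, ← Real.exp_add]
          ring_nf
  have hne : P {ω | (n : ℝ) * ε ≤ ∑ k ∈ Finset.range n, Y k ω} ≠ ∞ := measure_ne_top _ _
  rw [← ENNReal.ofReal_toReal hne]
  exact ENNReal.ofReal_le_ofReal hbound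

set_option maxHeartbeats 1000000 in
/-- One-sided tail-sum bound for centered variables. -/
lemma aux_onesided {Ω : Type*} [MeasurableSpace Ω] (P : Measure Ω) [IsProbabilityMeasure P]
    (Y : ℕ → Ω → ℝ)
    (hmeas : ∀ k, Measurable (Y k))
    (hindep : iIndepFun Y P)
    (hsubg : ∀ k (l : ℝ), Integrable (fun ω => Real.exp (l * Y k ω)) P ∧
      ∫ ω, Real.exp (l * Y k ω) ∂P ≤ Real.exp (l ^ 2 / 2))
    (Δ : ℝ) (hΔ0 : 0 < Δ) (hΔ1 : Δ ≤ 1) :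
    (∑' w : ℕ, P {ω | (∑ k ∈ Finset.range (w + 1), Y k ω) / (w + 1)
          > Δ - Real.sqrt (4 * Real.log (w + 1) / (w + 1))})
        ≤ ENNReal.ofReal (36 / Δ ^ 2 * Real.log (17 / Δ)) := by
  have hΔ2 : (0 : ℝ) < Δ ^ 2 := by positivity
  obtain ⟨L, hLdef⟩ : ∃ L : ℝ, L = Real.log (18 / Δ ^ 2) - 1 := ⟨_, rfl⟩
  have hlog18 : Real.log 18 < 3 := by
    rw [Real.log_lt_iff_lt_exp (by norm_num), show (3:ℝ) = ((3:ℕ):ℝ) by norm_num,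
      ← Real.exp_one_pow]
    calc (18:ℝ) < 2.7182818283 ^ 3 := by norm_num
      _ ≤ Real.exp 1 ^ 3 := pow_le_pow_left₀ (by norm_num) Real.exp_one_gt_d9.le 3
  have hlog17 : (2.772 : ℝ) < Real.log 17 := by
    have h16 : Real.log 16 ≤ Real.log 17 := Real.log_le_log (by norm_num) (by norm_num)
    have h16' : Real.log 16 = 4 * Real.log 2 := by
      rw [show (16:ℝ) = 2 ^ (4:ℕ) by norm_num, Real.log_pow]; norm_num
    nlinarith [Real.log_two_gt_d9]
  have hlogΔ : Real.log Δ ≤ 0 := Real.log_nonpos hΔ0.le hΔ1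
  have hlog18Δ : Real.log (18 / Δ ^ 2) = Real.log 18 - 2 * Real.log Δ := by
    rw [Real.log_div (by norm_num) (by positivity), Real.log_pow]; push_cast; ring
  have hL0 : 0 < L := by
    rw [hLdef, hlog18Δ]
    have h1 : (1:ℝ) < Real.log 18 := by
      rw [Real.lt_log_iff_exp_lt (by norm_num)]
      calc Real.exp 1 < 2.7182818286 := Real.exp_one_lt_d9
        _ ≤ 18 := by norm_num
    nlinarith
  obtain ⟨N, hNdef⟩ : ∃ N : ℕ, N = ⌈18 / Δ ^ 2 * L⌉₊ := ⟨_, rfl⟩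
  -- for w ≥ N the log condition holds
  have hcond : ∀ w : ℕ, N ≤ w → 9 * Real.log ((w : ℝ) + 1) ≤ Δ ^ 2 * ((w : ℝ) + 1) := by
    intro w hw
    obtain ⟨t, htdef⟩ : ∃ t : ℝ, t = (w : ℝ) + 1 := ⟨_, rfl⟩
    have ht0 : (0 : ℝ) < t := by rw [htdef]; positivity
    have htN : 18 / Δ ^ 2 * L ≤ t := by
      have h1 : (18 / Δ ^ 2 * L : ℝ) ≤ (N : ℝ) := hNdef ▸ Nat.le_ceil _
      have h2 : (N : ℝ) ≤ (w : ℝ) := by exact_mod_cast hw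
      rw [htdef]; linarith
    have hmul0 : (0:ℝ) < t * Δ ^ 2 / 18 := by positivity
    have hlogt : Real.log t ≤ t * Δ ^ 2 / 18 - 1 + Real.log (18 / Δ ^ 2) := by
      have hfac : t = (t * Δ ^ 2 / 18) * (18 / Δ ^ 2) := by field_simp
      calc Real.log t = Real.log (t * Δ ^ 2 / 18) + Real.log (18 / Δ ^ 2) := by
            rw [← Real.log_mul (ne_of_gt hmul0) (by positivity), ← hfac]
        _ ≤ t * Δ ^ 2 / 18 - 1 + Real.log (18 / Δ ^ 2) := by
            have := Real.log_le_sub_one_of_pos hmul0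
            linarith
    have h9L : 18 * L ≤ t * Δ ^ 2 := by
      have h3 : 18 / Δ ^ 2 * L * Δ ^ 2 ≤ t * Δ ^ 2 :=
        mul_le_mul_of_nonneg_right htN (le_of_lt hΔ2)
      have h4 : 18 / Δ ^ 2 * L * Δ ^ 2 = 18 * L := by field_simp
      linarith
    have h5 : 9 * Real.log t ≤ t * Δ ^ 2 / 2 + 9 * L := by
      rw [hLdef]; nlinarith
    rw [← htdef]
    linarith
  -- sqrt bound for w ≥ N
  have hsqrt : ∀ w : ℕ, N ≤ w →
      Real.sqrt (4 * Real.log ((w : ℝ) + 1) / ((w : ℝ) + 1)) ≤ 2 / 3 * Δ := by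
    intro w hw
    have ht0 : (0 : ℝ) < (w : ℝ) + 1 := by positivity
    have h9 := hcond w hw
    have harg : 4 * Real.log ((w : ℝ) + 1) / ((w : ℝ) + 1) ≤ (2 / 3 * Δ) ^ 2 := by
      rw [div_le_iff₀ ht0]
      nlinarith
    calc Real.sqrt (4 * Real.log ((w : ℝ) + 1) / ((w : ℝ) + 1))
        ≤ Real.sqrt ((2 / 3 * Δ) ^ 2) := Real.sqrt_le_sqrt harg
      _ = 2 / 3 * Δ := Real.sqrt_sq (by positivity)
  -- tail bound for w ≥ N
  have hgtail : ∀ w : ℕ, N ≤ w →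
      P {ω | (∑ k ∈ Finset.range (w + 1), Y k ω) / ((w : ℝ) + 1)
          > Δ - Real.sqrt (4 * Real.log ((w : ℝ) + 1) / ((w : ℝ) + 1))}
        ≤ ENNReal.ofReal (Real.exp (-(((w : ℝ) + 1) * Δ ^ 2) / 18)) := by
    intro w hw
    obtain ⟨τ, hτ⟩ : ∃ τ : ℝ, τ = Δ - Real.sqrt (4 * Real.log ((w : ℝ) + 1) / ((w : ℝ) + 1)) := ⟨_, rfl⟩
    rw [← hτ]
    have hτ3 : Δ / 3 ≤ τ := by
      have := hsqrt w hw
      rw [hτ]; linarith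
    have hτ0 : 0 ≤ τ := le_trans (by positivity) hτ3
    have ht0 : (0 : ℝ) < (w : ℝ) + 1 := by positivity
    have hsub : {ω | (∑ k ∈ Finset.range (w + 1), Y k ω) / ((w : ℝ) + 1) > τ}
        ⊆ {ω | ((w + 1 : ℕ) : ℝ) * τ ≤ ∑ k ∈ Finset.range (w + 1), Y k ω} := by
      intro ω hω
      simp only [Set.mem_setOf_eq] at hω ⊢
      have h1 := (lt_div_iff₀ ht0).mp hω
      push_cast
      nlinarith
    have hch := aux_chernoff P Y hmeas hindep hsubg (w + 1) τ hτ0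
    refine le_trans (measure_mono hsub) (hch.trans ?_)
    apply ENNReal.ofReal_le_ofReal
    apply Real.exp_le_exp.mpr
    push_cast
    have ht0' : (0:ℝ) ≤ (w:ℝ) + 1 := ht0.le
    have hτsq : Δ ^ 2 / 9 ≤ τ ^ 2 := by nlinarith [hτ3, hτ0]
    nlinarith [mul_le_mul_of_nonneg_left hτsq ht0']
  -- per-term bound: indicator + geometric term
  obtain ⟨q, hqdef⟩ : ∃ q : ℝ, q = Δ ^ 2 / 18 := ⟨_, rfl⟩
  have hq0 : 0 < q := by rw [hqdef]; positivity
  have hq1 : q ≤ 1 / 18 := by rw [hqdef]; nlinarith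
  obtain ⟨r, hrdef⟩ : ∃ r : ℝ, r = Real.exp (-q) := ⟨_, rfl⟩
  have hr0 : 0 ≤ r := by rw [hrdef]; exact Real.exp_nonneg _
  have hr1 : r < 1 := by rw [hrdef, Real.exp_lt_one_iff]; linarith
  have hterm : ∀ w : ℕ,
      P {ω | (∑ k ∈ Finset.range (w + 1), Y k ω) / ((w : ℝ) + 1)
          > Δ - Real.sqrt (4 * Real.log ((w : ℝ) + 1) / ((w : ℝ) + 1))}
      ≤ (if w < N then (1 : ℝ≥0∞) else 0) + ENNReal.ofReal (r * r ^ w) := by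
    intro w
    by_cases hw : w < N
    · simp only [hw, if_true]
      exact le_trans prob_le_one le_self_add
    · simp only [hw, if_false, zero_add]
      push_neg at hw
      refine (hgtail w hw).trans (ENNReal.ofReal_le_ofReal (le_of_eq ?_))
      rw [hrdef, ← Real.exp_nat_mul, ← Real.exp_add, hqdef]
      ring_nf
  have htsum_le : (∑' w : ℕ, P {ω | (∑ k ∈ Finset.range (w + 1), Y k ω) / ((w : ℝ) + 1)
          > Δ - Real.sqrt (4 * Real.log ((w : ℝ) + 1) / ((w : ℝ) + 1))})
      ≤ (∑' w : ℕ, (if w < N then (1 : ℝ≥0∞) else 0))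
        + ∑' w : ℕ, ENNReal.ofReal (r * r ^ w) := by
    refine le_trans (ENNReal.tsum_le_tsum hterm) ?_
    rw [ENNReal.tsum_add]
  have hind : (∑' w : ℕ, (if w < N then (1 : ℝ≥0∞) else 0)) = (N : ℝ≥0∞) := by
    rw [tsum_eq_sum (s := Finset.range N) (fun b hb => by
      simp [Finset.mem_range] at hb; simp [hb])]
    calc ∑ w ∈ Finset.range N, (if w < N then (1:ℝ≥0∞) else 0)
        = ∑ _w ∈ Finset.range N, 1 :=
          Finset.sum_congr rfl (fun i hi => if_pos (Finset.mem_range.mp hi))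
      _ = (N : ℝ≥0∞) := by simp
  have hgeom : (∑' w : ℕ, ENNReal.ofReal (r * r ^ w)) ≤ ENNReal.ofReal (19 / Δ ^ 2) := by
    have hsummable : Summable (fun w : ℕ => r * r ^ w) :=
      (summable_geometric_of_lt_one hr0 hr1).mul_left _
    rw [← ENNReal.ofReal_tsum_of_nonneg (fun w => mul_nonneg hr0 (pow_nonneg hr0 w)) hsummable]
    apply ENNReal.ofReal_le_ofReal
    rw [tsum_mul_left, tsum_geometric_of_lt_one hr0 hr1]
    have hrle : r ≤ 1 / (1 + q) := by
      rw [hrdef, Real.exp_neg, inv_eq_one_div]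
      have hexp : 1 + q ≤ Real.exp q := by linarith [Real.add_one_le_exp q]
      exact one_div_le_one_div_of_le (by linarith) hexp
    have hΔq : Δ ^ 2 = 18 * q := by rw [hqdef]; ring
    have h1r : Δ ^ 2 / 19 ≤ 1 - r := by
      have h6 : 1 / (1 + q) ≤ 1 - Δ ^ 2 / 19 := by
        rw [div_le_iff₀ (by linarith)]
        nlinarith [hq0, hq1, hΔq]
      linarith
    have h1r0 : 0 < 1 - r := by nlinarith
    calc r * (1 - r)⁻¹ ≤ 1 * (1 - r)⁻¹ := by
          apply mul_le_mul_of_nonneg_right hr1.le (by positivity)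
      _ = (1 - r)⁻¹ := one_mul _
      _ ≤ (Δ ^ 2 / 19)⁻¹ := by
          apply inv_anti₀ (by positivity) h1r
      _ = 19 / Δ ^ 2 := by field_simp
  -- final arithmetic
  have hN : (N : ℝ) < 18 / Δ ^ 2 * L + 1 := by
    rw [hNdef]; exact Nat.ceil_lt_add_one (by positivity)
  have hkey : 18 * L + Δ ^ 2 + 19 ≤ 36 * Real.log (17 / Δ) := by
    rw [Real.log_div (by norm_num) (ne_of_gt hΔ0), hLdef, hlog18Δ]
    nlinarith
  have hfinal : 18 / Δ ^ 2 * L + 1 + 19 / Δ ^ 2 ≤ 36 / Δ ^ 2 * Real.log (17 / Δ) := by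
    have heq : 18 / Δ ^ 2 * L + 1 + 19 / Δ ^ 2 = (18 * L + Δ ^ 2 + 19) / Δ ^ 2 := by
      field_simp <;> ring
    have heq2 : 36 / Δ ^ 2 * Real.log (17 / Δ) = 36 * Real.log (17 / Δ) / Δ ^ 2 := by ring
    rw [heq, heq2, div_le_div_iff₀ hΔ2 hΔ2]
    nlinarith [mul_le_mul_of_nonneg_right hkey hΔ2.le]
  have hL18 : (0:ℝ) ≤ 18 / Δ ^ 2 * L := mul_nonneg (by positivity) hL0.le
  refine htsum_le.trans ?_
  rw [hind]
  calc (N : ℝ≥0∞) + ∑' w : ℕ, ENNReal.ofReal (r * r ^ w)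
      ≤ ENNReal.ofReal ((N : ℝ)) + ENNReal.ofReal (19 / Δ ^ 2) := by
        rw [ENNReal.ofReal_natCast]
        exact add_le_add le_rfl hgeom
    _ ≤ ENNReal.ofReal (18 / Δ ^ 2 * L + 1) + ENNReal.ofReal (19 / Δ ^ 2) :=
        add_le_add (ENNReal.ofReal_le_ofReal hN.le) le_rfl
    _ = ENNReal.ofReal (18 / Δ ^ 2 * L + 1 + 19 / Δ ^ 2) :=
        (ENNReal.ofReal_add (by linarith) (by positivity)).symm
    _ ≤ ENNReal.ofReal (36 / Δ ^ 2 * Real.log (17 / Δ)) :=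
        ENNReal.ofReal_le_ofReal hfinal

set_option maxHeartbeats 1000000 in
theorem tail_sum_shrinking_window_le
    {Ω : Type*} [MeasurableSpace Ω] (P : Measure Ω) [IsProbabilityMeasure P]
    (X : ℕ → Ω → ℝ) (μ : ℝ)
    (hmeas : ∀ k, Measurable (X k))
    (hindep : iIndepFun X P)
    (hident : ∀ k l, IdentDistrib (X k) (X l) P P)
    (hmean : ∀ k, ∫ ω, X k ω ∂P = μ)
    (hsubg : ∀ k (l : ℝ),
      Integrable (fun ω => Real.exp (l * (X k ω - μ))) P ∧
      ∫ ω, Real.exp (l * (X k ω - μ)) ∂P ≤ Real.exp (l ^ 2 / 2))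
    (Δ : ℝ) (hΔ0 : 0 < Δ) (hΔ1 : Δ ≤ 1) :
    (∑' w : ℕ, P {ω | (∑ k ∈ Finset.range (w + 1), X k ω) / (w + 1) - μ
          > Δ - Real.sqrt (4 * Real.log (w + 1) / (w + 1))})
        ≤ ENNReal.ofReal (36 / Δ ^ 2 * Real.log (17 / Δ)) ∧
    (∑' w : ℕ, P {ω | (∑ k ∈ Finset.range (w + 1), X k ω) / (w + 1) - μ
          < Real.sqrt (4 * Real.log (w + 1) / (w + 1)) - Δ})
        ≤ ENNReal.ofReal (36 / Δ ^ 2 * Real.log (17 / Δ)) := by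
  have hdiv : ∀ (w : ℕ) (c : ℝ) (s : ℝ),
      (s - ((w:ℝ) + 1) * c) / ((w : ℝ) + 1) = s / ((w : ℝ) + 1) - c := by
    intro w c s
    have hne : ((w : ℝ) + 1) ≠ 0 := by positivity
    field_simp
  constructor
  · -- upper tail: apply aux_onesided to Y k ω = X k ω - μ
    have h1 : ∀ w : ℕ,
        {ω | (∑ k ∈ Finset.range (w + 1), X k ω) / ((w:ℝ) + 1) - μ
            > Δ - Real.sqrt (4 * Real.log ((w:ℝ) + 1) / ((w:ℝ) + 1))}
        = {ω | (∑ k ∈ Finset.range (w + 1), (X k ω - μ)) / ((w:ℝ) + 1)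
            > Δ - Real.sqrt (4 * Real.log ((w:ℝ) + 1) / ((w:ℝ) + 1))} := by
      intro w
      ext ω
      simp only [Set.mem_setOf_eq, Finset.sum_sub_distrib, Finset.sum_const,
        Finset.card_range, nsmul_eq_mul]
      rw [show ((w + 1 : ℕ) : ℝ) = (w : ℝ) + 1 by push_cast; ring, hdiv]
    have h2 : (∑' w : ℕ, P {ω | (∑ k ∈ Finset.range (w + 1), X k ω) / ((w:ℝ) + 1) - μ
            > Δ - Real.sqrt (4 * Real.log ((w:ℝ) + 1) / ((w:ℝ) + 1))})
        = ∑' w : ℕ, P {ω | (∑ k ∈ Finset.range (w + 1), (X k ω - μ)) / ((w:ℝ) + 1)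
            > Δ - Real.sqrt (4 * Real.log ((w:ℝ) + 1) / ((w:ℝ) + 1))} :=
      tsum_congr fun w => by rw [h1 w]
    rw [h2]
    exact aux_onesided P (fun k ω => X k ω - μ)
      (fun k => (hmeas k).sub measurable_const)
      (hindep.comp (fun _ x => x - μ) (fun _ => measurable_id.sub measurable_const))
      hsubg Δ hΔ0 hΔ1
  · -- lower tail: apply aux_onesided to Y k ω = μ - X k ω
    have h1 : ∀ w : ℕ,
        {ω | (∑ k ∈ Finset.range (w + 1), X k ω) / ((w:ℝ) + 1) - μ
            < Real.sqrt (4 * Real.log ((w:ℝ) + 1) / ((w:ℝ) + 1)) - Δ}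
        = {ω | (∑ k ∈ Finset.range (w + 1), (μ - X k ω)) / ((w:ℝ) + 1)
            > Δ - Real.sqrt (4 * Real.log ((w:ℝ) + 1) / ((w:ℝ) + 1))} := by
      intro w
      ext ω
      simp only [Set.mem_setOf_eq, Finset.sum_sub_distrib, Finset.sum_const,
        Finset.card_range, nsmul_eq_mul]
      have hne : ((w : ℝ) + 1) ≠ 0 := by positivity
      have hkey : (((w + 1 : ℕ) : ℝ) * μ - ∑ k ∈ Finset.range (w + 1), X k ω) / ((w:ℝ) + 1)
          = μ - (∑ k ∈ Finset.range (w + 1), X k ω) / ((w:ℝ) + 1) := by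
        push_cast
        field_simp
      rw [hkey]
      constructor <;> intro h <;> [skip; skip] <;> linarith
    have h2 : (∑' w : ℕ, P {ω | (∑ k ∈ Finset.range (w + 1), X k ω) / ((w:ℝ) + 1) - μ
            < Real.sqrt (4 * Real.log ((w:ℝ) + 1) / ((w:ℝ) + 1)) - Δ})
        = ∑' w : ℕ, P {ω | (∑ k ∈ Finset.range (w + 1), (μ - X k ω)) / ((w:ℝ) + 1)
            > Δ - Real.sqrt (4 * Real.log ((w:ℝ) + 1) / ((w:ℝ) + 1))} :=
      tsum_congr fun w => by rw [h1 w]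
    rw [h2]
    have hsubg' : ∀ k (l : ℝ), Integrable (fun ω => Real.exp (l * (μ - X k ω))) P ∧
        ∫ ω, Real.exp (l * (μ - X k ω)) ∂P ≤ Real.exp (l ^ 2 / 2) := by
      intro k l
      have hfun : (fun ω => Real.exp (l * (μ - X k ω)))
          = fun ω => Real.exp ((-l) * (X k ω - μ)) := by
        funext ω; ring_nf
      refine ⟨?_, ?_⟩
      · rw [hfun]; exact (hsubg k (-l)).1
      · rw [hfun]
        refine ((hsubg k (-l)).2).trans (le_of_eq ?_)
        rw [neg_pow]
        norm_num
    exact aux_onesided P (fun k ω => μ - X k ω)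
      (fun k => measurable_const.sub (hmeas k))
      (hindep.comp (fun _ x => μ - x) (fun _ => measurable_const.sub measurable_id))
      hsubg' Δ hΔ0 hΔ1
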